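/- Let (E,F) be a triangulation datum such that: E is nonempty; every e ∈ E occurs as an entry of some triple in F; the reflexive–transitive closure of the relation 'e and e′ occur as entries of a common triple of F' relates any two elements of E; and the zero colouring is the only element of Adm(E,F,3). Then |Adm(E,F,5)| ≤ 2^{|E|−1} + 1. -/

import Mathlib

/-- A colouring `θ : E → ℚ` is admissible for the triangulation datum `(E, F)`
and the integer `r` if every edge colour lies in `{0, 1/2, 1, …, (r-2)/2}` and
every triple of `F` satisfies the parity condition, the triangle inequalities,
and the upper bound constraint. -/
def IsAdmissible {E : Type*} (F : Multiset (E × E × E)) (r : ℕ) (θ : E → ℚ) : Prop :=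
  (∀ e : E, ∃ k : ℕ, k ≤ r - 2 ∧ θ e = (k : ℚ) / 2) ∧
  ∀ t ∈ F,
    (∃ z : ℤ, θ t.1 + θ t.2.1 + θ t.2.2 = (z : ℚ)) ∧
    θ t.1 ≤ θ t.2.1 + θ t.2.2 ∧
    θ t.2.1 ≤ θ t.1 + θ t.2.2 ∧
    θ t.2.2 ≤ θ t.1 + θ t.2.1 ∧
    θ t.1 + θ t.2.1 + θ t.2.2 ≤ (r : ℚ) - 2

/-- The set of admissible colourings of `(E, F)` for the integer `r`. -/
def Adm {E : Type*} (F : Multiset (E × E × E)) (r : ℕ) : Set (E → ℚ) :=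
  {θ | IsAdmissible F r θ}

private lemma half_ne_intQ (z : ℤ) : ((1:ℚ)/2) ≠ (z:ℚ) := by
  intro h
  have h2 : (2*z : ℤ) = 1 := by exact_mod_cast (by linarith : (2:ℚ)*(z:ℚ) = 1)
  omega

private lemma threehalf_ne_intQ (z : ℤ) : ((3:ℚ)/2) ≠ (z:ℚ) := by
  intro h
  have h2 : (2*z : ℤ) = 3 := by exact_mod_cast (by linarith : (2:ℚ)*(z:ℚ) = 3)
  omega

set_option maxHeartbeats 1600000 in
/-- For a triangulation datum with nonempty edge set in which every edge occurs
in some triple, the triples connect the edge set, and the zero colouring is the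
only element of `Adm(E,F,3)`, the stated bound on `|Adm(E,F,5)|` holds. -/
theorem adm_five_card_le {E : Type*} [Fintype E] [Nonempty E]
    (F : Multiset (E × E × E))
    (hcover : ∀ e : E, ∃ t ∈ F, e = t.1 ∨ e = t.2.1 ∨ e = t.2.2)
    (hconn : ∀ e e' : E,
      Relation.ReflTransGen
        (fun x y : E => ∃ t ∈ F,
          (x = t.1 ∨ x = t.2.1 ∨ x = t.2.2) ∧ (y = t.1 ∨ y = t.2.1 ∨ y = t.2.2))
        e e')
    (h3 : Adm F 3 = {(0 : E → ℚ)}) :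
    (Adm F 5).ncard ≤ 2 ^ (Fintype.card E - 1) + 1 := by
  classical
  -- Step 1: every admissible 5-colouring is {0,1}-valued
  have hbin : ∀ θ ∈ Adm F 5, ∀ e, θ e = 0 ∨ θ e = 1 := by
    intro θ hθ
    obtain ⟨hv, htri⟩ := hθ
    have hvals : ∀ e, θ e = 0 ∨ θ e = 1/2 ∨ θ e = 1 ∨ θ e = 3/2 := by
      intro e
      obtain ⟨k, hk, hke⟩ := hv e
      have hk3 : k ≤ 3 := by omega
      interval_cases k <;> rw [hke] <;> norm_num
    set ψ : E → ℚ := fun e => if θ e = 1/2 ∨ θ e = 3/2 then 1/2 else 0 with hψdef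
    have hpsi_eval : ∀ e, ψ e = if θ e = 1/2 ∨ θ e = 3/2 then 1/2 else 0 := fun e => rfl
    have hpsi_half : ∀ e, (θ e = 1/2 ∨ θ e = 3/2) → ψ e = 1/2 := by
      intro e h
      rw [hpsi_eval, if_pos h]
    have hpsi_int : ∀ e, (θ e = 0 ∨ θ e = 1) → ψ e = 0 := by
      intro e h
      rw [hpsi_eval, if_neg]
      rcases h with h|h <;> rw [h] <;> norm_num
    have hpv : ∀ e, ψ e = 0 ∨ ψ e = 1/2 := by
      intro e
      rcases hvals e with h|h|h|h
      · exact Or.inl (hpsi_int e (Or.inl h))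
      · exact Or.inr (hpsi_half e (Or.inl h))
      · exact Or.inl (hpsi_int e (Or.inr h))
      · exact Or.inr (hpsi_half e (Or.inr h))
    have hm : ∀ e, ∃ m : ℤ, θ e = ψ e + (m : ℚ) := by
      intro e
      rcases hvals e with h|h|h|h
      · exact ⟨0, by rw [hpsi_int e (Or.inl h), h]; norm_num⟩
      · exact ⟨0, by rw [hpsi_half e (Or.inl h), h]; norm_num⟩
      · exact ⟨1, by rw [hpsi_int e (Or.inr h), h]; norm_num⟩
      · exact ⟨1, by rw [hpsi_half e (Or.inr h), h]; norm_num⟩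
    have hψ3 : ψ ∈ Adm F 3 := by
      constructor
      · intro e
        rcases hpv e with h|h
        · exact ⟨0, by norm_num, by rw [h]; norm_num⟩
        · exact ⟨1, by norm_num, by rw [h]; norm_num⟩
      · intro t ht
        obtain ⟨⟨z, hz⟩, i1, i2, i3, hs⟩ := htri t ht
        obtain ⟨m1, hm1⟩ := hm t.1
        obtain ⟨m2, hm2⟩ := hm t.2.1
        obtain ⟨m3, hm3⟩ := hm t.2.2
        have hz' : ψ t.1 + ψ t.2.1 + ψ t.2.2 = ((z - m1 - m2 - m3 : ℤ) : ℚ) := by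
          rw [hm1, hm2, hm3] at hz
          push_cast
          linarith
        refine ⟨⟨z - m1 - m2 - m3, hz'⟩, ?_, ?_, ?_, ?_⟩ <;>
          rcases hpv t.1 with q1|q1 <;> rcases hpv t.2.1 with q2|q2 <;>
            rcases hpv t.2.2 with q3|q3 <;> rw [q1, q2, q3] at hz' ⊢ <;>
            first
              | (exfalso; exact half_ne_intQ (z - m1 - m2 - m3) (by linarith))
              | (exfalso; exact threehalf_ne_intQ (z - m1 - m2 - m3) (by linarith))
              | norm_num
    rw [h3] at hψ3
    have hψ0 : ψ = 0 := hψ3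
    intro e
    have he0 : ψ e = 0 := by rw [hψ0]; rfl
    rcases hvals e with h|h|h|h
    · exact Or.inl h
    · exfalso; have : ψ e = 1/2 := hpsi_half e (Or.inl h)
      rw [he0] at this; norm_num at this
    · exact Or.inr h
    · exfalso; have : ψ e = 1/2 := hpsi_half e (Or.inr h)
      rw [he0] at this; norm_num at this
  -- the zero-set map
  set Z : (E → ℚ) → Finset E := fun θ => Finset.univ.filter (fun e => θ e = 0) with hZdef
  have hZmem : ∀ θ e, e ∈ Z θ ↔ θ e = 0 := by
    intro θ e; simp [hZdef]
  have hinj : Set.InjOn Z (Adm F 5) := by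
    intro θ hθ θ' hθ' hZZ
    funext e
    have hiff : (θ e = 0) ↔ (θ' e = 0) := by rw [← hZmem, ← hZmem, hZZ]
    rcases hbin θ hθ e with h|h <;> rcases hbin θ' hθ' e with h'|h' <;>
      simp_all
  -- no triangle has colour-sum 1
  have hsum1 : ∀ θ, θ ∈ Adm F 5 → ∀ t ∈ F, θ t.1 + θ t.2.1 + θ t.2.2 ≠ 1 := by
    intro θ hθ t ht h1
    obtain ⟨-, i1, i2, i3, -⟩ := hθ.2 t ht
    rcases hbin θ hθ t.1 with hA|hA <;> rcases hbin θ hθ t.2.1 with hB|hB <;>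
      rcases hbin θ hθ t.2.2 with hC|hC <;>
        rw [hA, hB, hC] at i1 i2 i3 h1 <;> linarith
  -- connectivity: a colouring taking both values 0 and 1 has a triangle of sum 2
  have hS2 : ∀ θ, θ ∈ Adm F 5 → ∀ a b : E, θ a = 0 → θ b = 1 →
      ∃ t ∈ F, θ t.1 + θ t.2.1 + θ t.2.2 = 2 := by
    intro θ hθ a b ha0 hb1
    by_contra Hnot
    push_neg at Hnot
    have main : ∀ y : E, Relation.ReflTransGen
        (fun x y : E => ∃ t ∈ F,
          (x = t.1 ∨ x = t.2.1 ∨ x = t.2.2) ∧ (y = t.1 ∨ y = t.2.1 ∨ y = t.2.2))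
        a y → θ y = 0 := by
      intro y hy
      induction hy with
      | refl => exact ha0
      | @tail u v hpath hrel ih =>
        rcases hbin θ hθ v with hv|hv
        · exact hv
        exfalso
        obtain ⟨t, ht, hu, hvpos⟩ := hrel
        obtain ⟨-, i1, i2, i3, -⟩ := hθ.2 t ht
        have hs := Hnot t ht
        rcases hbin θ hθ t.1 with hA|hA <;> rcases hbin θ hθ t.2.1 with hB|hB <;>
          rcases hbin θ hθ t.2.2 with hC|hC <;>
            rcases hu with rfl|rfl|rfl <;> rcases hvpos with rfl|rfl|rfl <;>
              first
                | linarith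
                | (exact hs (by rw [hA, hB, hC]; norm_num))
    have := main b (hconn a b)
    rw [hb1] at this
    norm_num at this
  -- key: the zero sets of two nonzero admissible colourings are never complementary
  have hkey : ∀ θ ∈ Adm F 5, ∀ θ' ∈ Adm F 5, θ ≠ 0 → θ' ≠ 0 → Z θ' ≠ (Z θ)ᶜ := by
    intro θ hθ θ' hθ' hne hne' hcompl
    have hiff : ∀ e, θ' e = 0 ↔ ¬ (θ e = 0) := by
      intro e
      rw [← hZmem θ' e, hcompl, Finset.mem_compl, hZmem]
    obtain ⟨a, ha⟩ := Function.ne_iff.mp hne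
    have ha1 : θ a = 1 := (hbin θ hθ a).resolve_left (by simpa using ha)
    obtain ⟨b, hb⟩ := Function.ne_iff.mp hne'
    have hb1 : θ' b = 1 := (hbin θ' hθ' b).resolve_left (by simpa using hb)
    have hb0 : θ b = 0 := by
      by_contra h
      have := (hiff b).mpr h
      rw [this] at hb1
      norm_num at hb1
    obtain ⟨t, ht, hsum2⟩ := hS2 θ hθ b a hb0 ha1
    have hflip : ∀ e, θ' e = 1 - θ e := by
      intro e
      rcases hbin θ hθ e with h|h
      · have h0 : ¬ θ' e = 0 := by rw [hiff e]; simp [h]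
        have := (hbin θ' hθ' e).resolve_left h0
        rw [this, h]; norm_num
      · have h0 : θ' e = 0 := (hiff e).mpr (by rw [h]; norm_num)
        rw [h0, h]; norm_num
    have hsum1' : θ' t.1 + θ' t.2.1 + θ' t.2.2 = 1 := by
      rw [hflip, hflip, hflip]; linarith
    exact hsum1 θ' hθ' t ht hsum1'
  -- counting
  set G : Set (Finset E) := Z '' (Adm F 5 \ {0}) with hG
  have hfin : ∀ s : Set (Finset E), s.Finite := fun s => Set.toFinite s
  have hGcard : G.ncard ≤ 2 ^ (Fintype.card E - 1) := by
    have hdisj : Disjoint G (compl '' G) := by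
      rw [Set.disjoint_left]
      rintro x ⟨θ', ⟨hθ', hne'⟩, rfl⟩ ⟨y, ⟨θ, ⟨hθ, hne⟩, rfl⟩, hxy⟩
      exact hkey θ hθ θ' hθ' (by simpa using hne) (by simpa using hne') hxy.symm
    have hcardim : (compl '' G).ncard = G.ncard :=
      Set.ncard_image_of_injective _ compl_injective
    have hun : (G ∪ compl '' G).ncard = G.ncard + (compl '' G).ncard :=
      Set.ncard_union_eq hdisj (hfin _) (hfin _)
    have hle : (G ∪ compl '' G).ncard ≤ (Set.univ : Set (Finset E)).ncard :=
      Set.ncard_le_ncard (Set.subset_univ _) (hfin _)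
    have huniv : (Set.univ : Set (Finset E)).ncard = 2 ^ Fintype.card E := by
      rw [Set.ncard_univ, Nat.card_eq_fintype_card, Fintype.card_finset]
    have hpos : 1 ≤ Fintype.card E := Fintype.card_pos
    have h2 : 2 ^ Fintype.card E = 2 * 2 ^ (Fintype.card E - 1) := by
      have h' : Fintype.card E - 1 + 1 = Fintype.card E := Nat.succ_pred_eq_of_pos hpos
      calc 2 ^ Fintype.card E = 2 ^ (Fintype.card E - 1 + 1) := by rw [h']
        _ = 2 * 2 ^ (Fintype.card E - 1) := by rw [pow_succ]; ring
    omega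
  have hmaps : ∀ θ ∈ Adm F 5, Z θ ∈ insert Finset.univ G := by
    intro θ hθ
    by_cases h : θ = 0
    · have : Z θ = Finset.univ := by
        subst h
        ext e
        simp [hZdef]
      rw [this]
      exact Set.mem_insert _ _
    · exact Set.mem_insert_of_mem _ ⟨θ, ⟨hθ, h⟩, rfl⟩
  have h1 : (Adm F 5).ncard ≤ (insert Finset.univ G).ncard :=
    Set.ncard_le_ncard_of_injOn Z hmaps hinj (hfin _)
  have h2 : (insert Finset.univ G).ncard ≤ G.ncard + 1 := Set.ncard_insert_le _ _
  linarith
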